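/- There is no finite connected 3-GNDB graph with parameter γ = 2 whose diameter is at least 3. -/
import Mathlib

set_option linter.unusedSectionVars false

/-- The set of vertices closer to `a` than to `b`. -/
def closerSet {V : Type*} (G : SimpleGraph V) (a b : V) : Set V :=
  {x | G.dist x a < G.dist x b}

namespace GNDB
open SimpleGraph Finset

variable {V : Type*} [Fintype V] {G : SimpleGraph V}

lemma pair_cases {m n : ℕ} (h : ({m, n} : Set ℕ) = {2, 6}) :
    (m = 2 ∧ n = 6) ∨ (m = 6 ∧ n = 2) := by
  have hm : m ∈ ({2, 6} : Set ℕ) := h ▸ (by simp : m ∈ ({m, n} : Set ℕ))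
  have hn : n ∈ ({2, 6} : Set ℕ) := h ▸ (by simp : n ∈ ({m, n} : Set ℕ))
  have h2 : (2 : ℕ) ∈ ({m, n} : Set ℕ) := h.symm ▸ (by simp : (2:ℕ) ∈ ({2,6} : Set ℕ))
  have h6 : (6 : ℕ) ∈ ({m, n} : Set ℕ) := h.symm ▸ (by simp : (6:ℕ) ∈ ({2,6} : Set ℕ))
  simp only [Set.mem_insert_iff, Set.mem_singleton_iff] at hm hn h2 h6
  omega

lemma ne_of_dist {u v : V} {k : ℕ} (h : G.dist u v = k) (hk : k ≠ 0) : u ≠ v := by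
  rintro rfl
  rw [SimpleGraph.dist_self] at h
  omega

lemma chain (hconn : G.Connected) {u v : V} {n : ℕ} (h : G.dist u v = n + 1) :
    ∃ w, G.Adj u w ∧ G.dist w v = n := by
  obtain ⟨p, hp⟩ := hconn.exists_walk_length_eq_dist u v
  cases p with
  | nil => rw [h] at hp; simp at hp
  | @cons _ w _ hadj q =>
    refine ⟨w, hadj, ?_⟩
    have h1 : G.dist w v ≤ q.length := SimpleGraph.dist_le q
    have h2 : G.dist u v ≤ G.dist u w + G.dist w v := hconn.dist_triangle
    have h3 : G.dist u w = 1 := SimpleGraph.dist_eq_one_iff_adj.mpr hadj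
    simp only [SimpleGraph.Walk.length_cons] at hp
    omega

lemma three_not_two {s : Set V} {u v w : V} (h : s.ncard = 2) (hu : u ∈ s) (hv : v ∈ s)
    (hw : w ∈ s) (huv : u ≠ v) (huw : u ≠ w) (hvw : v ≠ w) : False := by
  obtain ⟨p, q, hpq, rfl⟩ := Set.ncard_eq_two.mp h
  simp only [Set.mem_insert_iff, Set.mem_singleton_iff] at hu hv hw
  rcases hu with rfl | rfl <;> rcases hv with rfl | rfl <;> rcases hw with rfl | rfl <;>
    simp_all

lemma gap (hconn : G.Connected) {a b : V} (hab : G.Adj a b) (x : V) :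
    G.dist x a ≤ G.dist x b + 1 ∧ G.dist x b ≤ G.dist x a + 1 := by
  have h1 : G.dist a b = 1 := SimpleGraph.dist_eq_one_iff_adj.mpr hab
  have h2 : G.dist b a = 1 := by rwa [SimpleGraph.dist_comm] at h1
  have t1 : G.dist x a ≤ G.dist x b + G.dist b a := hconn.dist_triangle
  have t2 : G.dist x b ≤ G.dist x a + G.dist a b := hconn.dist_triangle
  omega

lemma sum_ind (s : Set V) [DecidablePred (· ∈ s)] :
    ∑ x : V, (if x ∈ s then (1 : ℤ) else 0) = s.ncard := by
  classical
  rw [Finset.sum_boole, Set.ncard_eq_toFinset_card' s]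
  congr 1
  apply Finset.card_bij (fun a _ => a) <;> simp

lemma S_edge (hconn : G.Connected) {a b : V} (hab : G.Adj a b) :
    (∑ y : V, (G.dist y a : ℤ)) - ∑ y : V, (G.dist y b : ℤ) =
      ((closerSet G b a).ncard : ℤ) - (closerSet G a b).ncard := by
  classical
  have key : ∀ x : V, ((G.dist x a : ℤ) - G.dist x b) =
      (if x ∈ closerSet G b a then (1 : ℤ) else 0) -
        (if x ∈ closerSet G a b then (1 : ℤ) else 0) := by
    intro x
    have hg := gap hconn hab x
    simp only [closerSet, Set.mem_setOf_eq]
    split_ifs <;> omega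
  rw [← Finset.sum_sub_distrib]
  rw [Finset.sum_congr rfl (fun x _ => key x), Finset.sum_sub_distrib, sum_ind, sum_ind]


/-- The mod-8 potential. -/
noncomputable def Smod (G : SimpleGraph V) (x : V) : ZMod 8 :=
  ((∑ y : V, (G.dist y x : ℤ) : ℤ) : ZMod 8)

lemma Smod_edge (hconn : G.Connected)
    (hGNDB : ∀ a b : V, G.Adj a b →
      ({(closerSet G a b).ncard, (closerSet G b a).ncard} : Set ℕ) = {2, 6})
    {a b : V} (hab : G.Adj a b) : Smod G a = Smod G b + 4 := by
  have hS := S_edge hconn hab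
  have key : ((∑ y : V, (G.dist y a : ℤ)) - ∑ y : V, (G.dist y b : ℤ) : ℤ) = 4 ∨
      ((∑ y : V, (G.dist y a : ℤ)) - ∑ y : V, (G.dist y b : ℤ) : ℤ) = -4 := by
    rcases pair_cases (hGNDB a b hab) with ⟨h2, h6⟩ | ⟨h6, h2⟩ <;> rw [h2, h6] at hS <;>
      [left; right] <;> omega
  have hm4 : ((-4 : ℤ) : ZMod 8) = 4 := by decide
  have h4 : ((4 : ℤ) : ZMod 8) = 4 := by decide
  rcases key with hk | hk
  · have : Smod G a - Smod G b = ((4 : ℤ) : ZMod 8) := by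
      rw [Smod, Smod, ← Int.cast_sub, hk]
    rw [h4] at this
    linear_combination this
  · have : Smod G a - Smod G b = ((-4 : ℤ) : ZMod 8) := by
      rw [Smod, Smod, ← Int.cast_sub, hk]
    rw [hm4] at this
    linear_combination this

lemma Smod_walk (hconn : G.Connected)
    (hGNDB : ∀ a b : V, G.Adj a b →
      ({(closerSet G a b).ncard, (closerSet G b a).ncard} : Set ℕ) = {2, 6})
    {u v : V} (p : G.Walk u v) : Smod G u = Smod G v + 4 * p.length := by
  induction p with
  | nil => simp
  | cons h q ih =>
    rw [Smod_edge hconn hGNDB h, ih]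
    simp [SimpleGraph.Walk.length_cons]
    ring

lemma Smod_dist (hconn : G.Connected)
    (hGNDB : ∀ a b : V, G.Adj a b →
      ({(closerSet G a b).ncard, (closerSet G b a).ncard} : Set ℕ) = {2, 6})
    (u v : V) : Smod G u = Smod G v + 4 * (G.dist u v : ℕ) := by
  obtain ⟨p, hp⟩ := hconn.exists_walk_length_eq_dist u v
  rw [Smod_walk hconn hGNDB p, hp]

lemma no_tie (hconn : G.Connected)
    (hGNDB : ∀ a b : V, G.Adj a b →
      ({(closerSet G a b).ncard, (closerSet G b a).ncard} : Set ℕ) = {2, 6})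
    {a b : V} (hab : G.Adj a b) (x : V) : G.dist x a ≠ G.dist x b := by
  intro h
  have ha := Smod_dist hconn hGNDB a x
  have hb := Smod_dist hconn hGNDB b x
  have hd : G.dist a x = G.dist b x := by
    rw [SimpleGraph.dist_comm, h, SimpleGraph.dist_comm]
  rw [hd] at ha
  have hedge := Smod_edge hconn hGNDB hab
  rw [ha, hb] at hedge
  have h0 : (4 : ZMod 8) = 0 := left_eq_add.mp hedge
  exact absurd h0 (by decide)


lemma card8 (hconn : G.Connected)
    (hGNDB : ∀ a b : V, G.Adj a b →
      ({(closerSet G a b).ncard, (closerSet G b a).ncard} : Set ℕ) = {2, 6})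
    {a b : V} (hab : G.Adj a b) : Fintype.card V = 8 := by
  classical
  have hcover : ∀ x : V, (x ∈ closerSet G a b ∧ x ∉ closerSet G b a) ∨
      (x ∈ closerSet G b a ∧ x ∉ closerSet G a b) := by
    intro x
    have hne := no_tie hconn hGNDB hab x
    simp only [closerSet, Set.mem_setOf_eq]
    omega
  have hunion : (closerSet G a b).toFinset ∪ (closerSet G b a).toFinset = Finset.univ := by
    ext x
    simp only [Finset.mem_union, Set.mem_toFinset, Finset.mem_univ, iff_true]
    rcases hcover x with ⟨h, _⟩ | ⟨h, _⟩
    · exact Or.inl h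
    · exact Or.inr h
  have hdisj : Disjoint (closerSet G a b).toFinset (closerSet G b a).toFinset := by
    rw [Finset.disjoint_left]
    intro x hx hx'
    rw [Set.mem_toFinset] at hx hx'
    rcases hcover x with ⟨_, h⟩ | ⟨_, h⟩
    · exact h hx'
    · exact h hx
  have hcard := Finset.card_union_of_disjoint hdisj
  rw [hunion, Finset.card_univ] at hcard
  rw [hcard, ← Set.ncard_eq_toFinset_card', ← Set.ncard_eq_toFinset_card']
  rcases pair_cases (hGNDB a b hab) with ⟨h2, h6⟩ | ⟨h6, h2⟩ <;> omega

lemma small_side (hconn : G.Connected)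
    (hGNDB : ∀ a b : V, G.Adj a b →
      ({(closerSet G a b).ncard, (closerSet G b a).ncard} : Set ℕ) = {2, 6})
    {a b : V} (hab : G.Adj a b) (h2 : (closerSet G a b).ncard = 2) :
    ∃ c, G.Adj a c ∧ c ≠ b ∧ G.dist c b = 2 ∧
      (∀ y, G.Adj a y → y = b ∨ y = c) ∧
      (∀ x, x ≠ a → x ≠ c → G.dist x b + 1 = G.dist x a) := by
  have hdab : G.dist a b = 1 := SimpleGraph.dist_eq_one_iff_adj.mpr hab
  have hmema : a ∈ closerSet G a b := by
    simp only [closerSet, Set.mem_setOf_eq, SimpleGraph.dist_self, hdab]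
    omega
  obtain ⟨p, q, hpq, hset⟩ := Set.ncard_eq_two.mp h2
  -- identify c : the member other than a
  have hc : ∃ c, c ≠ a ∧ closerSet G a b = {a, c} := by
    rw [hset] at hmema
    simp only [Set.mem_insert_iff, Set.mem_singleton_iff] at hmema
    rcases hmema with rfl | rfl
    · exact ⟨q, hpq.symm, by rw [hset]⟩
    · exact ⟨p, hpq, by rw [hset, Set.pair_comm]⟩
  obtain ⟨c, hca, hW⟩ := hc
  have hcmem : c ∈ closerSet G a b := by rw [hW]; simp
  have hclt : G.dist c a < G.dist c b := hcmem
  -- c is adjacent to a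
  have hdca : G.dist c a = 1 := by
    by_contra hne1
    have h0 : G.dist c a ≠ 0 := fun h => hca (hconn.dist_eq_zero_iff.mp h)
    have hge2 : 2 ≤ G.dist c a := by omega
    have hac : G.dist a c = G.dist c a := SimpleGraph.dist_comm
    obtain ⟨w, haw, hwc⟩ := chain hconn (show G.dist a c = (G.dist c a - 1) + 1 by omega)
    have hwa : G.dist w a = 1 := by
      rw [SimpleGraph.dist_comm]; exact SimpleGraph.dist_eq_one_iff_adj.mpr haw
    have htri : G.dist c b ≤ G.dist c w + G.dist w b := hconn.dist_triangle
    have hcw : G.dist c w = G.dist c a - 1 := by rw [SimpleGraph.dist_comm]; omega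
    have hwb : G.dist w a < G.dist w b := by omega
    have hwmem : w ∈ closerSet G a b := hwb
    rw [hW] at hwmem
    simp only [Set.mem_insert_iff, Set.mem_singleton_iff] at hwmem
    rcases hwmem with rfl | rfl
    · exact (G.ne_of_adj haw) rfl
    · omega
  have hadjac : G.Adj a c := by
    rw [← SimpleGraph.dist_eq_one_iff_adj, SimpleGraph.dist_comm]
    exact hdca
  have hdcb : G.dist c b = 2 := by
    have := (gap hconn hab c).2
    omega
  have hcb : c ≠ b := ne_of_dist hdcb (by omega)
  refine ⟨c, hadjac, hcb, hdcb, ?_, ?_⟩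
  · intro y hay
    by_contra hcon
    push_neg at hcon
    obtain ⟨hyb, hyc⟩ := hcon
    have hdya : G.dist y a = 1 := by
      rw [SimpleGraph.dist_comm]; exact SimpleGraph.dist_eq_one_iff_adj.mpr hay
    have hnt := no_tie hconn hGNDB hab y
    have h0 : G.dist y b ≠ 0 := fun h => hyb (hconn.dist_eq_zero_iff.mp h)
    have hub : G.dist y b ≤ 2 := by
      have := (gap hconn hab y).2
      omega
    have hmem : y ∈ closerSet G a b := by
      show G.dist y a < G.dist y b
      omega
    rw [hW] at hmem
    simp only [Set.mem_insert_iff, Set.mem_singleton_iff] at hmem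
    rcases hmem with rfl | rfl
    · exact (G.ne_of_adj hay) rfl
    · exact hyc rfl
  · intro x hxa hxc
    have hnmem : x ∉ closerSet G a b := by
      rw [hW]
      simp only [Set.mem_insert_iff, Set.mem_singleton_iff]
      push_neg
      exact ⟨hxa, hxc⟩
    have hnlt : ¬ G.dist x a < G.dist x b := hnmem
    have hnt := no_tie hconn hGNDB hab x
    have := (gap hconn hab x).1
    omega


lemma core (hconn : G.Connected)
    (hGNDB : ∀ a b : V, G.Adj a b →
      ({(closerSet G a b).ncard, (closerSet G b a).ncard} : Set ℕ) = {2, 6})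
    {x0 x1 x2 x3 : V}
    (h01 : G.Adj x0 x1) (h12 : G.Adj x1 x2) (h23 : G.Adj x2 x3)
    (d02 : G.dist x0 x2 = 2) (d13 : G.dist x1 x3 = 2) (d03 : G.dist x0 x3 = 3)
    (hmid : (closerSet G x1 x2).ncard = 2) : False := by
  classical
  have dcomm : ∀ u v : V, G.dist u v = G.dist v u := fun u v => SimpleGraph.dist_comm
  have d01 : G.dist x0 x1 = 1 := SimpleGraph.dist_eq_one_iff_adj.mpr h01
  have d12 : G.dist x1 x2 = 1 := SimpleGraph.dist_eq_one_iff_adj.mpr h12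
  have d23 : G.dist x2 x3 = 1 := SimpleGraph.dist_eq_one_iff_adj.mpr h23
  -- |W(x0,x1)| = 2
  have hW01 : (closerSet G x0 x1).ncard = 2 := by
    rcases pair_cases (hGNDB x0 x1 h01) with ⟨h2, _⟩ | ⟨_, h2⟩
    · exact h2
    · exfalso
      refine three_not_two h2 (show G.dist x1 x1 < G.dist x1 x0 by
          rw [SimpleGraph.dist_self, dcomm x1 x0, d01]; omega)
        (show G.dist x2 x1 < G.dist x2 x0 by rw [dcomm x2 x1, d12, dcomm x2 x0, d02]; omega)
        (show G.dist x3 x1 < G.dist x3 x0 by rw [dcomm x3 x1, d13, dcomm x3 x0, d03]; omega)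
        (G.ne_of_adj h12) (ne_of_dist d13 (by omega)) (G.ne_of_adj h23)
  -- |W(x3,x2)| = 2
  have hW32 : (closerSet G x3 x2).ncard = 2 := by
    rcases pair_cases (hGNDB x2 x3 h23) with ⟨h2, _⟩ | ⟨_, h2⟩
    swap
    · exact h2
    · exfalso
      refine three_not_two h2 (show G.dist x0 x2 < G.dist x0 x3 by rw [d02, d03]; omega)
        (show G.dist x1 x2 < G.dist x1 x3 by rw [d12, d13]; omega)
        (show G.dist x2 x2 < G.dist x2 x3 by rw [SimpleGraph.dist_self, d23]; omega)
        (ne_of_dist d01 (by omega)) (ne_of_dist d02 (by omega)) (G.ne_of_adj h12)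
  -- small side packages
  obtain ⟨c0, hc0adj, hc0nx1, dc0x1, hN0, H0⟩ := small_side hconn hGNDB h01 hW01
  obtain ⟨cm, hcmadj, hcmnx2, dcmx2, hN1, H1⟩ := small_side hconn hGNDB h12 hmid
  obtain ⟨c3, hc3adj, hc3nx2, dc3x2, hN3, H3⟩ := small_side hconn hGNDB h23.symm hW32
  -- cm = x0
  have hcm : cm = x0 := by
    rcases hN1 x0 h01.symm with h | h
    · exact absurd h (ne_of_dist d02 (by omega))
    · exact h.symm
  rw [hcm] at hcmadj hcmnx2 dcmx2 hN1 H1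
  clear hcm
  -- basic ne facts
  have hc0nx0 : c0 ≠ x0 := (G.ne_of_adj hc0adj).symm
  have dx0c0 : G.dist x0 c0 = 1 := SimpleGraph.dist_eq_one_iff_adj.mpr hc0adj
  have hc0nx3 : c0 ≠ x3 := by
    intro h; rw [h] at dx0c0; omega
  -- d(c0,x2) = 1
  have dc0x2 : G.dist c0 x2 = 1 := by
    have := H1 c0 hc0nx1 hc0nx0
    omega
  have hc0nc3 : c0 ≠ c3 := by
    intro h; rw [h] at dc0x2; omega
  have hc0nx2 : c0 ≠ x2 := ne_of_dist dc0x2 (by omega)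
  -- d(c0,x3) = 2
  have dc0x3 : G.dist c0 x3 = 2 := by
    have := H3 c0 hc0nx3 hc0nc3
    omega
  -- c3 facts
  have hc3nx3 : c3 ≠ x3 := (G.ne_of_adj hc3adj).symm
  have dx3c3 : G.dist x3 c3 = 1 := SimpleGraph.dist_eq_one_iff_adj.mpr hc3adj
  have hc3nx0 : c3 ≠ x0 := by
    intro h; rw [h] at dx3c3; rw [dcomm x3 x0] at dx3c3; omega
  have hc3nx1 : c3 ≠ x1 := by
    intro h; rw [h] at dx3c3; rw [dcomm x3 x1] at dx3c3; omega
  have dc3x1 : G.dist c3 x1 = 3 := by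
    have := H1 c3 hc3nx1 hc3nx0
    omega
  have dc3x0 : G.dist c3 x0 = 4 := by
    have := H0 c3 hc3nx0 hc0nc3.symm
    omega
  -- edge x0 c0 : the small side is at x0
  have hx0c0 : (closerSet G x0 c0).ncard = 2 := by
    rcases pair_cases (hGNDB x0 c0 hc0adj) with ⟨h2, _⟩ | ⟨_, h2⟩
    · exact h2
    · exfalso
      obtain ⟨c'', hadj'', hne'', hdist'', hN'', H''⟩ := small_side hconn hGNDB hc0adj.symm h2
      have hadj02 : G.Adj c0 x2 := by
        rw [← SimpleGraph.dist_eq_one_iff_adj]; exact dc0x2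
      have hc'' : c'' = x2 := by
        rcases hN'' x2 hadj02 with h | h
        · exact absurd h (ne_of_dist d02 (by omega)).symm
        · exact h.symm
      rw [hc''] at H''
      have hx3c0 : x3 ≠ c0 := hc0nx3.symm
      have hx3x2 : x3 ≠ x2 := (G.ne_of_adj h23).symm
      have := H'' x3 hx3c0 hx3x2
      rw [dcomm x3 x0, dcomm x3 c0] at this
      omega
  obtain ⟨cV, hcVadj, hcVne, hcVdist, hNV, HV⟩ := small_side hconn hGNDB hc0adj hx0c0
  have hcV : cV = x1 := by
    rcases hN0 cV hcVadj with h | h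
    · exact h
    · exact absurd h hcVne
  rw [hcV] at HV
  have dc3c0 : G.dist c3 c0 = 3 := by
    have := HV c3 hc3nx0 hc3nx1
    omega
  -- edge x3 c3 : the small side is at c3
  have hc3x3 : (closerSet G c3 x3).ncard = 2 := by
    rcases pair_cases (hGNDB x3 c3 hc3adj) with ⟨h2, _⟩ | ⟨_, h2⟩
    · exfalso
      obtain ⟨c', hadj', hne', hdist', hN', H'⟩ := small_side hconn hGNDB hc3adj h2
      have hc' : c' = x2 := by
        rcases hN3 c' hadj' with h | h
        · exact h
        · exact absurd h hne'
      rw [hc'] at H'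
      have hx0x3 : x0 ≠ x3 := ne_of_dist d03 (by omega)
      have hx0x2 : x0 ≠ x2 := ne_of_dist d02 (by omega)
      have := H' x0 hx0x3 hx0x2
      have hx0c3 : G.dist x0 c3 = 4 := by rw [dcomm]; exact dc3x0
      omega
    · exact h2
  obtain ⟨y, hyadj, hynx3, hydist, hNc3, H4⟩ := small_side hconn hGNDB hc3adj.symm hc3x3
  -- y facts
  have dyc3 : G.dist y c3 = 1 := by
    rw [dcomm]; exact SimpleGraph.dist_eq_one_iff_adj.mpr hyadj
  have hync3 : y ≠ c3 := (G.ne_of_adj hyadj).symm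
  have hynx2 : y ≠ x2 := by
    intro h; rw [h, dcomm x2 c3] at dyc3; omega
  have hynx1 : y ≠ x1 := by
    intro h; rw [h, dcomm x1 c3] at dyc3; omega
  have hynx0 : y ≠ x0 := by
    intro h; rw [h, dcomm x0 c3] at dyc3; omega
  have hync0 : y ≠ c0 := by
    intro h; rw [h, dcomm c0 c3] at dyc3; omega
  have dyx2 : G.dist y x2 = 1 := by
    have := H3 y hynx3 hync3
    omega
  -- pairwise distinctness
  have n01 : x0 ≠ x1 := G.ne_of_adj h01
  have n02 : x0 ≠ x2 := ne_of_dist d02 (by omega)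
  have n03 : x0 ≠ x3 := ne_of_dist d03 (by omega)
  have n0c0 : x0 ≠ c0 := hc0nx0.symm
  have n0c3 : x0 ≠ c3 := hc3nx0.symm
  have n0y : x0 ≠ y := hynx0.symm
  have n12 : x1 ≠ x2 := G.ne_of_adj h12
  have n13 : x1 ≠ x3 := ne_of_dist d13 (by omega)
  have n1c0 : x1 ≠ c0 := hc0nx1.symm
  have n1c3 : x1 ≠ c3 := hc3nx1.symm
  have n1y : x1 ≠ y := hynx1.symm
  have n23 : x2 ≠ x3 := G.ne_of_adj h23
  have n2c0 : x2 ≠ c0 := hc0nx2.symm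
  have n2c3 : x2 ≠ c3 := hc3nx2.symm
  have n2y : x2 ≠ y := hynx2.symm
  have n3c0 : x3 ≠ c0 := hc0nx3.symm
  have n3c3 : x3 ≠ c3 := G.ne_of_adj hc3adj
  have n3y : x3 ≠ y := hynx3.symm
  have nc0c3 : c0 ≠ c3 := hc0nc3
  have nc0y : c0 ≠ y := hync0.symm
  have nc3y : c3 ≠ y := hync3.symm
  -- the seven known vertices
  set s : Finset V := {x0, x1, x2, x3, c0, c3, y} with hs
  have hcard7 : s.card = 7 := by
    rw [hs]
    rw [Finset.card_insert_of_notMem (by simp [n01, n02, n03, n0c0, n0c3, n0y]),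
        Finset.card_insert_of_notMem (by simp [n12, n13, n1c0, n1c3, n1y]),
        Finset.card_insert_of_notMem (by simp [n23, n2c0, n2c3, n2y]),
        Finset.card_insert_of_notMem (by simp [n3c0, n3c3, n3y]),
        Finset.card_insert_of_notMem (by simp [nc0c3, nc0y]),
        Finset.card_insert_of_notMem (by simp [nc3y]),
        Finset.card_singleton]
  have hcardV : Fintype.card V = 8 := card8 hconn hGNDB h01
  obtain ⟨z, hz⟩ : ∃ z, z ∉ s := by
    by_contra hcon
    push_neg at hcon
    have hsub : (Finset.univ : Finset V) ⊆ s := fun w _ => hcon w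
    have := Finset.card_le_card hsub
    rw [Finset.card_univ, hcardV, hcard7] at this
    omega
  have hzmem := hz
  rw [hs] at hzmem
  simp only [Finset.mem_insert, Finset.mem_singleton, not_or] at hzmem
  obtain ⟨hznx0, hznx1, hznx2, hznx3, hznc0, hznc3, hzny⟩ := hzmem
  -- distances from z
  have hq0 : G.dist z x2 ≠ 0 := fun h => hznx2 (hconn.dist_eq_zero_iff.mp h)
  have dzx1 : G.dist z x1 = G.dist z x2 + 1 := (H1 z hznx1 hznx0).symm
  have dzx0 : G.dist z x0 = G.dist z x2 + 2 := by
    have := H0 z hznx0 hznc0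
    omega
  have dzx3 : G.dist z x3 = G.dist z x2 + 1 := (H3 z hznx3 hznc3).symm
  have dzc3 : G.dist z c3 = G.dist z x2 + 2 := by
    have := H4 z hznc3 hzny
    omega
  have dzc0 : G.dist z c0 = G.dist z x2 + 1 := by
    have := HV z hznx0 hznx1
    omega
  -- z is not adjacent to y
  have hnzy : ¬ G.Adj z y := by
    intro h
    have hdzy : G.dist z y = 1 := SimpleGraph.dist_eq_one_iff_adj.mpr h
    have htri : G.dist z c3 ≤ G.dist z y + G.dist y c3 := hconn.dist_triangle
    omega
  -- every vertex is in insert z s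
  have huniv : insert z s = Finset.univ := by
    apply Finset.eq_univ_of_card
    rw [Finset.card_insert_of_notMem hz, hcard7, hcardV]
  -- every neighbor of z is x2
  have helim : ∀ w, G.Adj z w → w = x2 := by
    intro w hzw
    have hwmem : w ∈ insert z s := huniv ▸ Finset.mem_univ w
    rw [hs] at hwmem
    simp only [Finset.mem_insert, Finset.mem_singleton] at hwmem
    rcases hwmem with h | h | h | h | h | h | h | h
    · exact absurd h.symm (G.ne_of_adj hzw)
    · -- w = x0 : neighbors of x0 are x1, c0
      rw [h] at hzw
      rcases hN0 z hzw.symm with hh | hh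
      · exact absurd hh hznx1
      · exact absurd hh hznc0
    · -- w = x1
      rw [h] at hzw
      rcases hN1 z hzw.symm with hh | hh
      · exact absurd hh hznx2
      · exact absurd hh hznx0
    · exact h
    · -- w = x3
      rw [h] at hzw
      rcases hN3 z hzw.symm with hh | hh
      · exact absurd hh hznx2
      · exact absurd hh hznc3
    · -- w = c0 : dist z c0 ≥ 2 but adjacency gives 1
      rw [h] at hzw
      have : G.dist z c0 = 1 := SimpleGraph.dist_eq_one_iff_adj.mpr hzw
      omega
    · -- w = c3
      rw [h] at hzw
      rcases hNc3 z hzw.symm with hh | hh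
      · exact absurd hh hznx3
      · exact absurd hh hzny
    · -- w = y
      rw [h] at hzw
      exact absurd hzw hnzy
  -- z has a neighbor, which must be x2
  obtain ⟨w, hzw, -⟩ := chain hconn (show G.dist z x2 = (G.dist z x2 - 1) + 1 by omega)
  have hadjz2 : G.Adj z x2 := by
    have := helim w hzw
    rwa [this] at hzw
  -- final contradiction on edge z x2
  rcases pair_cases (hGNDB z x2 hadjz2) with ⟨h2, _⟩ | ⟨_, h2⟩
  · obtain ⟨c, hcadj, hcne, -, -, -⟩ := small_side hconn hGNDB hadjz2 h2
    exact hcne (helim c hcadj)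
  · obtain ⟨c, -, -, -, -, H5⟩ := small_side hconn hGNDB hadjz2.symm h2
    by_cases hcx0 : c = x0
    · have h5 := H5 x1 n12 (hcx0 ▸ n01.symm)
      have hx1z : G.dist x1 z = 0 := by omega
      exact hznx1 ((hconn.dist_eq_zero_iff.mp hx1z).symm)
    · have := H5 x0 n02 (fun h => hcx0 h.symm)
      -- G.dist x0 z + 1 = G.dist x0 x2 = 2
      have hx0z : G.dist x0 z = 1 := by omega
      have : G.Adj x0 z := SimpleGraph.dist_eq_one_iff_adj.mp hx0z
      rcases hN0 z this with h | h
      · exact hznx1 h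
      · exact hznc0 h

end GNDB

/-- There is no finite connected 3-GNDB graph with parameter `γ = 2` whose diameter
is at least 3. -/
theorem stmt_12 {V : Type*} [Fintype V] (G : SimpleGraph V) (hconn : G.Connected)
    (hGNDB : ∀ a b : V, G.Adj a b →
      ({(closerSet G a b).ncard, (closerSet G b a).ncard} : Set ℕ) = {2, 6}) :
    ¬ 3 ≤ G.diam := by
  intro hdiam
  have hne : Nonempty V := hconn.nonempty
  obtain ⟨u, v, huv⟩ := SimpleGraph.exists_dist_eq_diam (G := G)
  have h3 : 3 ≤ G.dist u v := huv ▸ hdiam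
  obtain ⟨m, hm⟩ : ∃ m, G.dist u v = m + 3 := ⟨G.dist u v - 3, by omega⟩
  obtain ⟨x1, h01, hx1⟩ := GNDB.chain hconn (show G.dist u v = (m + 2) + 1 by omega)
  obtain ⟨x2, h12, hx2⟩ := GNDB.chain hconn (show G.dist x1 v = (m + 1) + 1 by omega)
  obtain ⟨x3, h23, hx3⟩ := GNDB.chain hconn (show G.dist x2 v = m + 1 by omega)
  have d01 : G.dist u x1 = 1 := SimpleGraph.dist_eq_one_iff_adj.mpr h01
  have d12 : G.dist x1 x2 = 1 := SimpleGraph.dist_eq_one_iff_adj.mpr h12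
  have d23 : G.dist x2 x3 = 1 := SimpleGraph.dist_eq_one_iff_adj.mpr h23
  have d02 : G.dist u x2 = 2 := by
    have hub : G.dist u x2 ≤ G.dist u x1 + G.dist x1 x2 := hconn.dist_triangle
    have hlb : G.dist u v ≤ G.dist u x2 + G.dist x2 v := hconn.dist_triangle
    omega
  have d13 : G.dist x1 x3 = 2 := by
    have hub : G.dist x1 x3 ≤ G.dist x1 x2 + G.dist x2 x3 := hconn.dist_triangle
    have hlb : G.dist x1 v ≤ G.dist x1 x3 + G.dist x3 v := hconn.dist_triangle
    omega
  have d03 : G.dist u x3 = 3 := by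
    have hub : G.dist u x3 ≤ G.dist u x2 + G.dist x2 x3 := hconn.dist_triangle
    have hlb : G.dist u v ≤ G.dist u x3 + G.dist x3 v := hconn.dist_triangle
    omega
  rcases GNDB.pair_cases (hGNDB x1 x2 h12) with ⟨h2, _⟩ | ⟨_, h2⟩
  · exact GNDB.core hconn hGNDB h01 h12 h23 d02 d13 d03 h2
  · refine GNDB.core hconn hGNDB h23.symm h12.symm h01.symm ?_ ?_ ?_ h2
    · rw [SimpleGraph.dist_comm]; exact d13
    · rw [SimpleGraph.dist_comm]; exact d02
    · rw [SimpleGraph.dist_comm]; exact d03
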